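/- Let W = (P, Γ, Δ, S) be a weighted pushdown system over an idempotent semiring S whose order ⊑ is total and in which extend preserves inequality, and fix c_f = p_f ε. If the (infinite) equation system (1) has a witness component, i.e., some configuration c such that the set {ks(k)_{[c]} : k ∈ ℕ} of values of the Kleene sequence of (1) at [c] is infinite, then the finite equation system (2) also has a witness component, i.e., some triple (p, X, q) such that {ks(k)_{[pXq]} : k ∈ ℕ} is infinite. (Theorem 2, negative case.) -/

import Mathlib

universe u v w

/-- An idempotent semiring `(D, ⊕, ⊗, 0̄, 1̄)` (Definition 1). -/
structure IdemSemiring' (D : Type u) where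
  add : D → D → D
  mul : D → D → D
  zero : D
  one : D
  add_assoc : ∀ a b c, add (add a b) c = add a (add b c)
  add_comm : ∀ a b, add a b = add b a
  add_zero : ∀ a, add a zero = a
  mul_assoc : ∀ a b c, mul (mul a b) c = mul a (mul b c)
  one_mul : ∀ a, mul one a = a
  mul_one : ∀ a, mul a one = a
  mul_add : ∀ a b c, mul a (add b c) = add (mul a b) (mul a c)
  add_mul : ∀ a b c, mul (add a b) c = add (mul a c) (mul b c)
  mul_zero : ∀ a, mul a zero = zero
  zero_mul : ∀ a, mul zero a = zero
  add_idem : ∀ a, add a a = a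

/-- The natural order: `a ⊑ b` iff `a ⊕ b = a` (Definition 2). -/
def IdemSemiring'.le {D : Type u} (S : IdemSemiring' D) (a b : D) : Prop :=
  S.add a b = a

/-- Extend preserves inequality: `a ≠ b → a ⊗ c ≠ b ⊗ c` for `a, b, c ≠ 0̄` (Definition 3). -/
def PreservesIneq {D : Type u} (S : IdemSemiring' D) : Prop :=
  ∀ a b c : D, a ≠ S.zero → b ≠ S.zero → c ≠ S.zero → a ≠ b → S.mul a c ≠ S.mul b c

/-- Combine `⨁` of a list of semiring elements (`0̄` for the empty list). -/
def combineList {D : Type u} (S : IdemSemiring' D) (l : List D) : D :=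
  l.foldr S.add S.zero

/-- Extend `⨂` of a list of semiring elements (`1̄` for the empty list). -/
def prodList {D : Type u} (S : IdemSemiring' D) (l : List D) : D :=
  l.foldr S.mul S.one

/-- A rule `pX —d→ qα` of a weighted pushdown system. -/
structure PDSRule (P : Type v) (Γ : Type w) (D : Type u) where
  p : P
  X : Γ
  d : D
  q : P
  α : List Γ

/-- A configuration `pγ`. -/
abbrev PDSConfig (P : Type v) (Γ : Type w) := P × List Γ

/-- One step using rule `r` : `pXγ ⟶ᵣ qαγ`. -/
def StepBy {P : Type v} {Γ : Type w} {D : Type u} (r : PDSRule P Γ D)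
    (c c' : PDSConfig P Γ) : Prop :=
  ∃ γ : List Γ, c = (r.p, r.X :: γ) ∧ c' = (r.q, r.α ++ γ)

/-- `Steps σ c c'` : the rule sequence `σ` leads from `c` to `c'`. -/
def Steps {P : Type v} {Γ : Type w} {D : Type u} :
    List (PDSRule P Γ D) → PDSConfig P Γ → PDSConfig P Γ → Prop
  | [], c, c' => c = c'
  | r :: σ, c, c' => ∃ c'', StepBy r c c'' ∧ Steps σ c'' c'

/-- The weight `v(σ) = d_{r₁} ⊗ ⋯ ⊗ d_{r_n}` of a rule sequence (with `v(ε) = 1̄`). -/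
def seqWeight {P : Type v} {Γ : Type w} {D : Type u} (S : IdemSemiring' D)
    (σ : List (PDSRule P Γ D)) : D :=
  σ.foldr (fun r acc => S.mul r.d acc) S.one

/-- Applies rule `r` to configuration `c`, if possible. -/
def applyRule? {P : Type v} {Γ : Type w} {D : Type u} [DecidableEq P] [DecidableEq Γ]
    (r : PDSRule P Γ D) (c : PDSConfig P Γ) : Option (PDSConfig P Γ) :=
  match c.2 with
  | [] => none
  | X :: γ => if r.p = c.1 ∧ r.X = X then some (r.q, r.α ++ γ) else none

/-- `I(c)` : `1̄` if `c = c_f` and `0̄` otherwise. -/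
def Ifun {P : Type v} {Γ : Type w} {D : Type u} [DecidableEq P] [DecidableEq Γ]
    (S : IdemSemiring' D) (cf c : PDSConfig P Γ) : D :=
  if c = cf then S.one else S.zero

/-- Right-hand side of equation system (1): `[c] = I(c) ⊕ ⨁_{c ⟶ᵣ c'} (d_r ⊗ [c'])`. -/
def rhs1 {P : Type v} {Γ : Type w} {D : Type u} [DecidableEq P] [DecidableEq Γ]
    (S : IdemSemiring' D) (Δ : List (PDSRule P Γ D)) (cf : PDSConfig P Γ)
    (g : PDSConfig P Γ → D) (c : PDSConfig P Γ) : D :=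
  S.add (Ifun S cf c)
    (Δ.foldr (fun r acc =>
      S.add (match applyRule? r c with
             | some c' => S.mul r.d (g c')
             | none => S.zero) acc) S.zero)

/-- The Kleene sequence of equation system (1), starting from the all-`0̄` assignment. -/
def ks1 {P : Type v} {Γ : Type w} {D : Type u} [DecidableEq P] [DecidableEq Γ]
    (S : IdemSemiring' D) (Δ : List (PDSRule P Γ D)) (cf : PDSConfig P Γ) :
    ℕ → PDSConfig P Γ → D
  | 0 => fun _ => S.zero
  | k + 1 => rhs1 S Δ cf (ks1 S Δ cf k)

/-- Right-hand side of equation system (2) for the pop-sequence variables `[pXq]` :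
`[pXq] = ⨁_{pX—d→qε} d ⊕ ⨁_{pX—d→rY} (d ⊗ [rYq]) ⊕ ⨁_{pX—d→rYZ} (d ⊗ ⨁_{s} ([rYs] ⊗ [sZq]))`. -/
noncomputable def rhs2 {P : Type v} {Γ : Type w} {D : Type u}
    [Fintype P] [DecidableEq P] [DecidableEq Γ]
    (S : IdemSemiring' D) (Δ : List (PDSRule P Γ D))
    (g : P × Γ × P → D) : P × Γ × P → D :=
  fun x =>
    match x with
    | (p, X, q) =>
      Δ.foldr (fun r acc =>
        S.add
          (if r.p = p ∧ r.X = X then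
            match r.α with
            | [] => if r.q = q then r.d else S.zero
            | [Y] => S.mul r.d (g (r.q, Y, q))
            | [Y, Z] =>
                S.mul r.d
                  (combineList S ((Finset.univ : Finset P).toList.map
                    (fun s => S.mul (g (r.q, Y, s)) (g (s, Z, q)))))
            | _ => S.zero
           else S.zero)
          acc) S.zero

/-- The Kleene sequence of equation system (2), starting from the all-`0̄` assignment. -/
noncomputable def ks2 {P : Type v} {Γ : Type w} {D : Type u}
    [Fintype P] [DecidableEq P] [DecidableEq Γ]
    (S : IdemSemiring' D) (Δ : List (PDSRule P Γ D)) :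
    ℕ → P × Γ × P → D
  | 0 => fun _ => S.zero
  | k + 1 => rhs2 S Δ (ks2 S Δ k)

/-- `σ` is a pop sequence for `(p, X, q)` over the rules `Δ` : `pX ⟶_σ qε`. -/
def PopSeq {P : Type v} {Γ : Type w} {D : Type u}
    (Δ σ : List (PDSRule P Γ D)) (p : P) (X : Γ) (q : P) : Prop :=
  (∀ r ∈ σ, r ∈ Δ) ∧ Steps σ (p, [X]) (q, ([] : List Γ))
section Aux

universe u' v' w'
variable {P : Type v'} {Γ : Type w'} {D : Type u'}

namespace IdemSemiring'
variable (S : IdemSemiring' D)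

theorem zero_add' (a : D) : S.add S.zero a = a := by
  rw [S.add_comm]; exact S.add_zero a

theorem le_refl' (a : D) : S.le a a := S.add_idem a

theorem le_trans' {a b c : D} (h1 : S.le a b) (h2 : S.le b c) : S.le a c := by
  unfold IdemSemiring'.le at *
  calc S.add a c = S.add (S.add a b) c := by rw [h1]
    _ = S.add a (S.add b c) := S.add_assoc ..
    _ = S.add a b := by rw [h2]
    _ = a := h1

theorem le_antisymm' {a b : D} (h1 : S.le a b) (h2 : S.le b a) : a = b := by
  unfold IdemSemiring'.le at *
  calc a = S.add a b := h1.symm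
    _ = S.add b a := S.add_comm ..
    _ = b := h2

theorem le_zero' (a : D) : S.le a S.zero := S.add_zero a

theorem le_add_left (a b : D) : S.le (S.add a b) a := by
  unfold IdemSemiring'.le
  calc S.add (S.add a b) a = S.add a (S.add b a) := S.add_assoc ..
    _ = S.add a (S.add a b) := by rw [S.add_comm b a]
    _ = S.add (S.add a a) b := (S.add_assoc ..).symm
    _ = S.add a b := by rw [S.add_idem]

theorem le_add_right (a b : D) : S.le (S.add a b) b := by
  rw [S.add_comm]; exact S.le_add_left b a

theorem le_add_of {a x y : D} (h1 : S.le a x) (h2 : S.le a y) : S.le a (S.add x y) := by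
  unfold IdemSemiring'.le at *
  rw [← S.add_assoc, h1, h2]

theorem mul_le_mul' {a a' b b' : D} (h1 : S.le a a') (h2 : S.le b b') :
    S.le (S.mul a b) (S.mul a' b') := by
  have s1 : S.le (S.mul a b) (S.mul a' b) := by
    unfold IdemSemiring'.le at *
    rw [← S.add_mul, h1]
  have s2 : S.le (S.mul a' b) (S.mul a' b') := by
    unfold IdemSemiring'.le at *
    rw [← S.mul_add, h2]
  exact S.le_trans' s1 s2

end IdemSemiring'

theorem combineList_nil (S : IdemSemiring' D) : combineList S [] = S.zero := rfl

theorem combineList_cons (S : IdemSemiring' D) (a : D) (l : List D) :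
    combineList S (a :: l) = S.add a (combineList S l) := rfl

theorem combineList_append (S : IdemSemiring' D) (l1 l2 : List D) :
    combineList S (l1 ++ l2) = S.add (combineList S l1) (combineList S l2) := by
  induction l1 with
  | nil => simp [combineList_nil, S.zero_add']
  | cons a l ih =>
      simp only [List.cons_append, combineList_cons, ih, S.add_assoc]

theorem le_combineList_of_mem (S : IdemSemiring' D) {x : D} {l : List D} (h : x ∈ l) :
    S.le (combineList S l) x := by
  induction l with
  | nil => simp at h
  | cons a l ih =>
      rcases List.mem_cons.mp h with h | h
      · subst h; exact S.le_add_left x (combineList S l)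
      · exact S.le_trans' (S.le_add_right a (combineList S l)) (ih h)

theorem le_combineList (S : IdemSemiring' D) {a : D} {l : List D}
    (h : ∀ x ∈ l, S.le a x) : S.le a (combineList S l) := by
  induction l with
  | nil => exact S.le_zero' a
  | cons b l ih =>
      exact S.le_add_of (h b (by simp)) (ih (fun x hx => h x (by simp [hx])))

theorem combineList_le_of_subset (S : IdemSemiring' D) {l l' : List D}
    (h : ∀ x ∈ l, x ∈ l') : S.le (combineList S l') (combineList S l) :=
  le_combineList S (fun x hx => le_combineList_of_mem S (h x hx))

theorem combineList_map_mul_left {α : Type*} (S : IdemSemiring' D) (d : D) (f : α → D)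
    (l : List α) :
    combineList S (l.map fun x => S.mul d (f x)) = S.mul d (combineList S (l.map f)) := by
  induction l with
  | nil => simp [combineList_nil, S.mul_zero]
  | cons a l ih => simp [combineList_cons, ih, S.mul_add]

theorem combineList_map_mul_right {α : Type*} (S : IdemSemiring' D) (d : D) (f : α → D)
    (l : List α) :
    combineList S (l.map fun x => S.mul (f x) d) = S.mul (combineList S (l.map f)) d := by
  induction l with
  | nil => simp [combineList_nil, S.zero_mul]
  | cons a l ih => simp [combineList_cons, ih, S.add_mul]

theorem mem_foldr_append {α β : Type*} (f : α → List β) (l : List α) (x : β) :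
    (x ∈ l.foldr (fun r acc => f r ++ acc) []) ↔ ∃ r ∈ l, x ∈ f r := by
  induction l with
  | nil => simp
  | cons a l ih => simp [ih]

theorem combineList_map_foldr_append {α β : Type*} (S : IdemSemiring' D)
    (f : α → List β) (g : β → D) (l : List α) :
    combineList S ((l.foldr (fun r acc => f r ++ acc) []).map g)
      = l.foldr (fun r acc => S.add (combineList S ((f r).map g)) acc) S.zero := by
  induction l with
  | nil => rfl
  | cons a l ih => simp [List.map_append, combineList_append, ← ih, List.flatMap, List.map_flatten]

theorem seqWeight_nil (S : IdemSemiring' D) :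
    seqWeight S ([] : List (PDSRule P Γ D)) = S.one := rfl

theorem seqWeight_cons (S : IdemSemiring' D) (r : PDSRule P Γ D) (σ : List (PDSRule P Γ D)) :
    seqWeight S (r :: σ) = S.mul r.d (seqWeight S σ) := rfl

theorem seqWeight_append (S : IdemSemiring' D) (σ₁ σ₂ : List (PDSRule P Γ D)) :
    seqWeight S (σ₁ ++ σ₂) = S.mul (seqWeight S σ₁) (seqWeight S σ₂) := by
  induction σ₁ with
  | nil => simp [seqWeight_nil, S.one_mul]
  | cons r σ ih => simp [seqWeight_cons, ih, S.mul_assoc]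

end Aux
section Aux2

universe u' v' w'
variable {P : Type v'} {Γ : Type w'} {D : Type u'}

theorem steps_nil' {c c' : PDSConfig P Γ} :
    Steps ([] : List (PDSRule P Γ D)) c c' ↔ c = c' := Iff.rfl

theorem steps_cons' {r : PDSRule P Γ D} {σ : List (PDSRule P Γ D)} {c c' : PDSConfig P Γ} :
    Steps (r :: σ) c c' ↔ ∃ c'', StepBy r c c'' ∧ Steps σ c'' c' := Iff.rfl

theorem steps_append' {σ₁ σ₂ : List (PDSRule P Γ D)} {c c' c'' : PDSConfig P Γ}
    (h1 : Steps σ₁ c c') (h2 : Steps σ₂ c' c'') : Steps (σ₁ ++ σ₂) c c'' := by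
  induction σ₁ generalizing c with
  | nil => rw [steps_nil'] at h1; subst h1; exact h2
  | cons r σ ih =>
      obtain ⟨cm, hstep, hrest⟩ := h1
      exact ⟨cm, hstep, ih hrest⟩

theorem steps_lift {σ : List (PDSRule P Γ D)} {p q : P} {α β : List Γ}
    (h : Steps σ (p, α) (q, β)) (δ : List Γ) : Steps σ (p, α ++ δ) (q, β ++ δ) := by
  induction σ generalizing p α with
  | nil =>
      rw [steps_nil'] at h
      rw [steps_nil']
      simp only [Prod.mk.injEq] at h ⊢
      exact ⟨h.1, by rw [h.2]⟩
  | cons r σ ih =>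
      obtain ⟨cm, ⟨γ, hc, hcm⟩, hrest⟩ := h
      simp only [Prod.mk.injEq] at hc
      subst hcm
      refine ⟨(r.q, r.α ++ (γ ++ δ)), ⟨γ ++ δ, ?_, rfl⟩, ?_⟩
      · simp only [Prod.mk.injEq]
        exact ⟨hc.1, by rw [hc.2, List.cons_append]⟩
      · have := ih (p := r.q) (α := r.α ++ γ) hrest
        rw [List.append_assoc] at this
        exact this

theorem steps_nil_stack {σ : List (PDSRule P Γ D)} {p : P} {c' : PDSConfig P Γ}
    (h : Steps σ (p, ([] : List Γ)) c') : σ = [] ∧ c' = (p, []) := by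
  cases σ with
  | nil => exact ⟨rfl, h.symm⟩
  | cons r σ =>
      obtain ⟨cm, ⟨γ, hc, _⟩, _⟩ := h
      simp only [Prod.mk.injEq] at hc
      exact absurd hc.2 (by simp)

/-- Decomposition: a path from `(p, X::γ)` to `(qf, [])` splits into a pop sequence
for `X` followed by a path from `(q, γ)`. -/
theorem steps_split {Δ : List (PDSRule P Γ D)} (hΔ : ∀ r ∈ Δ, r.α.length ≤ 2) :
    ∀ (n : ℕ) (σ : List (PDSRule P Γ D)), σ.length ≤ n → (∀ r ∈ σ, r ∈ Δ) →
    ∀ (p : P) (X : Γ) (γ : List Γ) (qf : P), Steps σ (p, X :: γ) (qf, ([] : List Γ)) →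
    ∃ (q : P) (σ₁ σ₂ : List (PDSRule P Γ D)), σ = σ₁ ++ σ₂ ∧
      (∀ r ∈ σ₁, r ∈ Δ) ∧ (∀ r ∈ σ₂, r ∈ Δ) ∧
      Steps σ₁ (p, [X]) (q, ([] : List Γ)) ∧ Steps σ₂ (q, γ) (qf, ([] : List Γ)) := by
  intro n
  induction n with
  | zero =>
      intro σ hlen _ p X γ qf hsteps
      rw [List.length_eq_zero_iff.mp (Nat.le_zero.mp hlen)] at hsteps
      rw [steps_nil'] at hsteps
      simp at hsteps
  | succ n ih =>
      intro σ hlen hsub p X γ qf hsteps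
      cases σ with
      | nil => rw [steps_nil'] at hsteps; simp at hsteps
      | cons r σ' =>
          obtain ⟨cm, ⟨γ₁, hc, hcm⟩, hrest⟩ := hsteps
          simp only [Prod.mk.injEq] at hc
          obtain ⟨hrp, hstk⟩ := hc
          have hrX : r.X = X := (List.cons.injEq _ _ _ _ ▸ hstk).1.symm
          have hγ₁ : γ₁ = γ := by
            have := (List.cons.injEq _ _ _ _ ▸ hstk).2; exact this.symm
          subst hcm
          rw [hγ₁] at hrest
          have hrΔ : r ∈ Δ := hsub r (by simp)
          have hσ'sub : ∀ x ∈ σ', x ∈ Δ := fun x hx => hsub x (by simp [hx])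
          have hσ'len : σ'.length ≤ n := Nat.le_of_succ_le_succ hlen
          have hα2 := hΔ r hrΔ
          match hα : r.α with
          | [] =>
              rw [hα] at hrest
              refine ⟨r.q, [r], σ', rfl, ?_, hσ'sub, ?_, hrest⟩
              · intro x hx; simp at hx; subst hx; exact hrΔ
              · exact ⟨(r.q, []), ⟨[], by simp [hrp.symm, hrX], by simp [hα]⟩, rfl⟩
          | [Y] =>
              rw [hα] at hrest
              obtain ⟨q, τ₁, τ₂, hdecomp, hτ₁sub, hτ₂sub, hpop, htail⟩ :=
                ih σ' hσ'len hσ'sub r.q Y γ qf hrest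
              refine ⟨q, r :: τ₁, τ₂, by simp [hdecomp], ?_, hτ₂sub, ?_, htail⟩
              · intro x hx
                rcases List.mem_cons.mp hx with hx | hx
                · subst hx; exact hrΔ
                · exact hτ₁sub x hx
              · exact ⟨(r.q, [Y]), ⟨[], by simp [hrp.symm, hrX], by simp [hα]⟩, hpop⟩
          | [Y, Z] =>
              rw [hα] at hrest
              obtain ⟨q₁, τ₁, τ₂, hdecomp, hτ₁sub, hτ₂sub, hpop1, htail1⟩ :=
                ih σ' hσ'len hσ'sub r.q Y (Z :: γ) qf hrest
              have hτ₂len : τ₂.length ≤ n := by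
                have : τ₂.length ≤ σ'.length := by
                  rw [hdecomp]; simp
                omega
              obtain ⟨q₂, υ₁, υ₂, hdecomp2, hυ₁sub, hυ₂sub, hpop2, htail2⟩ :=
                ih τ₂ hτ₂len hτ₂sub q₁ Z γ qf htail1
              refine ⟨q₂, r :: (τ₁ ++ υ₁), υ₂, ?_, ?_, hυ₂sub, ?_, htail2⟩
              · rw [hdecomp, hdecomp2]; simp
              · intro x hx
                rcases List.mem_cons.mp hx with hx | hx
                · subst hx; exact hrΔ
                · rcases List.mem_append.mp hx with hx | hx
                  · exact hτ₁sub x hx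
                  · exact hυ₁sub x hx
              · refine ⟨(r.q, [Y, Z]), ⟨[], by simp [hrp.symm, hrX], by simp [hα]⟩, ?_⟩
                have hlift : Steps τ₁ (r.q, [Y] ++ [Z]) (q₁, [] ++ [Z]) := steps_lift hpop1 [Z]
                simp only [List.nil_append] at hlift
                exact steps_append' hlift hpop2
          | Y :: Z :: W :: rest =>
              rw [hα] at hα2; simp at hα2

end Aux2
section Aux3

universe u' v' w'
variable {P : Type v'} {Γ : Type w'} {D : Type u'} [DecidableEq P] [DecidableEq Γ]

def pathsList (Δ : List (PDSRule P Γ D)) (cf : PDSConfig P Γ) :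
    ℕ → PDSConfig P Γ → List (List (PDSRule P Γ D))
  | 0, _ => []
  | k+1, c =>
      (if c = cf then [([] : List (PDSRule P Γ D))] else []) ++
      Δ.foldr (fun r acc =>
        (match applyRule? r c with
         | some c' => (pathsList Δ cf k c').map (fun σ => r :: σ)
         | none => []) ++ acc) []

theorem applyRule?_eq_some {r : PDSRule P Γ D} {c c' : PDSConfig P Γ} :
    applyRule? r c = some c' ↔ StepBy r c c' := by
  obtain ⟨p, stk⟩ := c
  cases stk with
  | nil =>
      simp only [applyRule?, StepBy]
      constructor
      · intro h; exact absurd h (by simp)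
      · rintro ⟨γ, h1, _⟩; simp at h1
  | cons X γ =>
      simp only [applyRule?]
      constructor
      · intro h
        by_cases hpx : r.p = p ∧ r.X = X
        · rw [if_pos hpx] at h
          refine ⟨γ, ?_, ?_⟩
          · simp [hpx.1, hpx.2]
          · exact (Option.some.injEq _ _ ▸ h).symm
        · rw [if_neg hpx] at h; exact absurd h (by simp)
      · rintro ⟨γ', h1, rfl⟩
        simp only [Prod.mk.injEq, List.cons.injEq] at h1
        rw [if_pos ⟨h1.1.symm, h1.2.1.symm⟩, h1.2.2]

theorem mem_pathsList_succ {Δ : List (PDSRule P Γ D)} {cf c : PDSConfig P Γ} {k : ℕ}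
    {σ : List (PDSRule P Γ D)} :
    σ ∈ pathsList Δ cf (k+1) c ↔
      (σ = [] ∧ c = cf) ∨
      ∃ r ∈ Δ, ∃ c', applyRule? r c = some c' ∧ ∃ τ ∈ pathsList Δ cf k c', σ = r :: τ := by
  rw [pathsList, List.mem_append, mem_foldr_append]
  constructor
  · rintro (h | ⟨r, hr, hm⟩)
    · left
      by_cases hc : c = cf
      · rw [if_pos hc] at h; simp at h; exact ⟨h, hc⟩
      · rw [if_neg hc] at h; simp at h
    · right
      rcases happ : applyRule? r c with _ | c'
      · rw [happ] at hm; simp at hm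
      · rw [happ] at hm
        simp only [List.mem_map] at hm
        obtain ⟨τ, hτ, rfl⟩ := hm
        exact ⟨r, hr, c', happ, τ, hτ, rfl⟩
  · rintro (⟨rfl, rfl⟩ | ⟨r, hr, c', happ, τ, hτ, rfl⟩)
    · left; simp
    · right
      refine ⟨r, hr, ?_⟩
      rw [happ]
      exact List.mem_map_of_mem hτ

theorem pathsList_sound {Δ : List (PDSRule P Γ D)} {cf : PDSConfig P Γ} :
    ∀ {k : ℕ} {c : PDSConfig P Γ} {σ : List (PDSRule P Γ D)}, σ ∈ pathsList Δ cf k c →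
      (∀ r ∈ σ, r ∈ Δ) ∧ Steps σ c cf ∧ σ.length < k := by
  intro k
  induction k with
  | zero => intro c σ h; simp [pathsList] at h
  | succ k ih =>
      intro c σ h
      rcases mem_pathsList_succ.mp h with ⟨rfl, rfl⟩ | ⟨r, hr, c', happ, τ, hτ, rfl⟩
      · exact ⟨by simp, rfl, by simp⟩
      · obtain ⟨hsub, hsteps, hlen⟩ := ih hτ
        refine ⟨?_, ⟨c', applyRule?_eq_some.mp happ, hsteps⟩, by simp; omega⟩
        intro x hx
        rcases List.mem_cons.mp hx with hx | hx
        · subst hx; exact hr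
        · exact hsub x hx

theorem pathsList_complete {Δ : List (PDSRule P Γ D)} {cf : PDSConfig P Γ} :
    ∀ {σ : List (PDSRule P Γ D)} {c : PDSConfig P Γ} {k : ℕ},
      (∀ r ∈ σ, r ∈ Δ) → Steps σ c cf → σ.length < k → σ ∈ pathsList Δ cf k c := by
  intro σ
  induction σ with
  | nil =>
      intro c k _ hsteps hlen
      rw [steps_nil'] at hsteps
      subst hsteps
      cases k with
      | zero => simp at hlen
      | succ k => exact mem_pathsList_succ.mpr (Or.inl ⟨rfl, rfl⟩)
  | cons r σ' ih =>
      intro c k hsub hsteps hlen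
      cases k with
      | zero => simp at hlen
      | succ k =>
          obtain ⟨c'', hstep, hrest⟩ := hsteps
          refine mem_pathsList_succ.mpr (Or.inr ⟨r, hsub r (by simp), c'',
            applyRule?_eq_some.mpr hstep, σ', ?_, rfl⟩)
          exact ih (fun x hx => hsub x (by simp [hx])) hrest (by simp at hlen; omega)

theorem pathsList_mono {Δ : List (PDSRule P Γ D)} {cf : PDSConfig P Γ} {k k' : ℕ}
    (hkk : k ≤ k') {c : PDSConfig P Γ} {σ : List (PDSRule P Γ D)}
    (h : σ ∈ pathsList Δ cf k c) : σ ∈ pathsList Δ cf k' c := by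
  obtain ⟨h1, h2, h3⟩ := pathsList_sound h
  exact pathsList_complete h1 h2 (by omega)

noncomputable def popTrees [Fintype P] (Δ : List (PDSRule P Γ D)) :
    ℕ → P → Γ → P → List (List (PDSRule P Γ D))
  | 0, _, _, _ => []
  | k+1, p, X, q =>
      Δ.foldr (fun r acc =>
        (if r.p = p ∧ r.X = X then
          match r.α with
          | [] => if r.q = q then [[r]] else []
          | [Y] => (popTrees Δ k r.q Y q).map (fun σ => r :: σ)
          | [Y, Z] => (Finset.univ : Finset P).toList.flatMap (fun s =>
              (popTrees Δ k r.q Y s).flatMap (fun σ₁ =>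
                (popTrees Δ k s Z q).map (fun σ₂ => r :: (σ₁ ++ σ₂))))
          | _ => []
         else []) ++ acc) []

theorem popTrees_zero [Fintype P] (Δ : List (PDSRule P Γ D)) (p : P) (X : Γ) (q : P) :
    popTrees Δ 0 p X q = [] := by rw [popTrees]

theorem mem_popTrees_succ [Fintype P] {Δ : List (PDSRule P Γ D)} {k : ℕ} {p q : P} {X : Γ}
    {σ : List (PDSRule P Γ D)} :
    σ ∈ popTrees Δ (k+1) p X q ↔
      ∃ r ∈ Δ, r.p = p ∧ r.X = X ∧
        ((r.α = [] ∧ r.q = q ∧ σ = [r]) ∨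
         (∃ Y, r.α = [Y] ∧ ∃ τ ∈ popTrees Δ k r.q Y q, σ = r :: τ) ∨
         (∃ Y Z s, r.α = [Y, Z] ∧ ∃ τ₁ ∈ popTrees Δ k r.q Y s, ∃ τ₂ ∈ popTrees Δ k s Z q,
            σ = r :: (τ₁ ++ τ₂))) := by
  rw [popTrees, mem_foldr_append]
  constructor
  · rintro ⟨r, hr, hm⟩
    by_cases hpx : r.p = p ∧ r.X = X
    · rw [if_pos hpx] at hm
      refine ⟨r, hr, hpx.1, hpx.2, ?_⟩
      rcases hα : r.α with _ | ⟨Y, _ | ⟨Z, _ | _⟩⟩ <;> rw [hα] at hm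
      · by_cases hq : r.q = q
        · rw [if_pos hq] at hm
          simp only [List.mem_singleton] at hm
          exact Or.inl ⟨rfl, hq, hm⟩
        · rw [if_neg hq] at hm; simp at hm
      · simp only [List.mem_map] at hm
        obtain ⟨τ, hτ, rfl⟩ := hm
        exact Or.inr (Or.inl ⟨Y, rfl, τ, hτ, rfl⟩)
      · simp only [List.mem_flatMap, List.mem_map] at hm
        obtain ⟨s, _, τ₁, hτ₁, τ₂, hτ₂, rfl⟩ := hm
        exact Or.inr (Or.inr ⟨Y, Z, s, rfl, τ₁, hτ₁, τ₂, hτ₂, rfl⟩)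
      · simp at hm
    · rw [if_neg hpx] at hm; simp at hm
  · rintro ⟨r, hr, hp, hX, hcase⟩
    refine ⟨r, hr, ?_⟩
    rw [if_pos ⟨hp, hX⟩]
    rcases hcase with ⟨hα, hq, rfl⟩ | ⟨Y, hα, τ, hτ, rfl⟩ | ⟨Y, Z, s, hα, τ₁, hτ₁, τ₂, hτ₂, rfl⟩
    · rw [hα, if_pos hq]; simp
    · rw [hα]; exact List.mem_map_of_mem hτ
    · rw [hα]
      simp only [List.mem_flatMap, List.mem_map]
      exact ⟨s, by simp, τ₁, hτ₁, τ₂, hτ₂, rfl⟩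

theorem popTrees_sound [Fintype P] {Δ : List (PDSRule P Γ D)} :
    ∀ {k : ℕ} {p q : P} {X : Γ} {σ : List (PDSRule P Γ D)}, σ ∈ popTrees Δ k p X q →
      (∀ r ∈ σ, r ∈ Δ) ∧ Steps σ (p, [X]) (q, ([] : List Γ)) ∧ σ.length < 2 ^ k := by
  intro k
  induction k with
  | zero => intro p q X σ h; rw [popTrees_zero] at h; simp at h
  | succ k ih =>
      intro p q X σ h
      have h2k : 0 < 2 ^ k := pow_pos (by omega : (0:ℕ) < 2) k
      have h2k1 : 2 ^ (k+1) = 2 * 2 ^ k := by rw [Nat.pow_succ]; ring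
      rcases mem_popTrees_succ.mp h with ⟨r, hr, hp, hX, hcase⟩
      rcases hcase with ⟨hα, hq, rfl⟩ | ⟨Y, hα, τ, hτ, rfl⟩ | ⟨Y, Z, s, hα, τ₁, hτ₁, τ₂, hτ₂, rfl⟩
      · refine ⟨by intro x hx; simp at hx; subst hx; exact hr, ?_, by simp [h2k1]; omega⟩
        exact ⟨(q, []), ⟨[], by simp [hp, hX], by simp [hα, hq]⟩, rfl⟩
      · obtain ⟨hsub, hsteps, hlen⟩ := ih hτ
        refine ⟨?_, ?_, by simp [h2k1]; omega⟩
        · intro x hx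
          rcases List.mem_cons.mp hx with hx | hx
          · subst hx; exact hr
          · exact hsub x hx
        · exact ⟨(r.q, [Y]), ⟨[], by simp [hp, hX], by simp [hα]⟩, hsteps⟩
      · obtain ⟨hsub₁, hsteps₁, hlen₁⟩ := ih hτ₁
        obtain ⟨hsub₂, hsteps₂, hlen₂⟩ := ih hτ₂
        refine ⟨?_, ?_, by simp [h2k1]; omega⟩
        · intro x hx
          rcases List.mem_cons.mp hx with hx | hx
          · subst hx; exact hr
          · rcases List.mem_append.mp hx with hx | hx
            · exact hsub₁ x hx
            · exact hsub₂ x hx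
        · refine ⟨(r.q, [Y, Z]), ⟨[], by simp [hp, hX], by simp [hα]⟩, ?_⟩
          have hlift : Steps τ₁ (r.q, [Y] ++ [Z]) (s, [] ++ [Z]) := steps_lift hsteps₁ [Z]
          simp only [List.nil_append] at hlift
          exact steps_append' hlift hsteps₂

theorem popTrees_mono_succ [Fintype P] {Δ : List (PDSRule P Γ D)} :
    ∀ {k : ℕ} {p q : P} {X : Γ} {σ : List (PDSRule P Γ D)},
      σ ∈ popTrees Δ k p X q → σ ∈ popTrees Δ (k+1) p X q := by
  intro k
  induction k with
  | zero => intro p q X σ h; rw [popTrees_zero] at h; simp at h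
  | succ k ih =>
      intro p q X σ h
      rcases mem_popTrees_succ.mp h with ⟨r, hr, hp, hX, hcase⟩
      refine mem_popTrees_succ.mpr ⟨r, hr, hp, hX, ?_⟩
      rcases hcase with ⟨hα, hq, rfl⟩ | ⟨Y, hα, τ, hτ, rfl⟩ | ⟨Y, Z, s, hα, τ₁, hτ₁, τ₂, hτ₂, rfl⟩
      · exact Or.inl ⟨hα, hq, rfl⟩
      · exact Or.inr (Or.inl ⟨Y, hα, τ, ih hτ, rfl⟩)
      · exact Or.inr (Or.inr ⟨Y, Z, s, hα, τ₁, ih hτ₁, τ₂, ih hτ₂, rfl⟩)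

theorem popTrees_mono [Fintype P] {Δ : List (PDSRule P Γ D)} {k k' : ℕ} (hkk : k ≤ k')
    {p q : P} {X : Γ} {σ : List (PDSRule P Γ D)}
    (h : σ ∈ popTrees Δ k p X q) : σ ∈ popTrees Δ k' p X q := by
  induction k' with
  | zero => rw [Nat.le_zero.mp hkk] at h; exact h
  | succ k' ih =>
      rcases Nat.lt_or_ge k (k'+1) with hk | hk
      · exact popTrees_mono_succ (ih (by omega))
      · have : k = k' + 1 := by omega
        subst this; exact h

theorem popTrees_complete [Fintype P] {Δ : List (PDSRule P Γ D)}
    (hΔ : ∀ r ∈ Δ, r.α.length ≤ 2) :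
    ∀ (n : ℕ) (σ : List (PDSRule P Γ D)), σ.length ≤ n → (∀ r ∈ σ, r ∈ Δ) →
    ∀ (p : P) (X : Γ) (q : P) (k : ℕ), Steps σ (p, [X]) (q, ([] : List Γ)) →
      σ.length < k → σ ∈ popTrees Δ k p X q := by
  intro n
  induction n with
  | zero =>
      intro σ hlen _ p X q k hsteps _
      rw [List.length_eq_zero_iff.mp (Nat.le_zero.mp hlen)] at hsteps
      rw [steps_nil'] at hsteps
      simp at hsteps
  | succ n ih =>
      intro σ hlen hsub p X q k hsteps hk
      cases σ with
      | nil => rw [steps_nil'] at hsteps; simp at hsteps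
      | cons r σ' =>
          cases k with
          | zero => simp at hk
          | succ k =>
          obtain ⟨cm, ⟨γ, hc, hcm⟩, hrest⟩ := hsteps
          simp only [Prod.mk.injEq] at hc
          have hγ : γ = [] := by
            have := (List.cons.injEq _ _ _ _ ▸ hc.2).2; exact this.symm
          have hrX : r.X = X := (List.cons.injEq _ _ _ _ ▸ hc.2).1.symm
          have hrp : r.p = p := hc.1.symm
          subst hcm hγ
          rw [List.append_nil] at hrest
          have hrΔ : r ∈ Δ := hsub r (by simp)
          have hσ'sub : ∀ x ∈ σ', x ∈ Δ := fun x hx => hsub x (by simp [hx])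
          have hσ'len : σ'.length ≤ n := by simp at hlen; omega
          have hα2 := hΔ r hrΔ
          have hσlen : (r :: σ').length = σ'.length + 1 := by simp
          refine mem_popTrees_succ.mpr ⟨r, hrΔ, hrp, hrX, ?_⟩
          match hα : r.α with
          | [] =>
              rw [hα] at hrest
              obtain ⟨hσ', hq⟩ := steps_nil_stack hrest
              have hq' : r.q = q := by
                simp only [Prod.mk.injEq] at hq; exact hq.1.symm
              exact Or.inl ⟨rfl, hq', by rw [hσ']⟩
          | [Y] =>
              rw [hα] at hrest
              refine Or.inr (Or.inl ⟨Y, rfl, σ', ?_, rfl⟩)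
              exact ih σ' hσ'len hσ'sub r.q Y q k hrest (by simp at hk; omega)
          | [Y, Z] =>
              rw [hα] at hrest
              obtain ⟨s, τ₁, τ₂, hdecomp, hτ₁sub, hτ₂sub, hpop1, hpop2⟩ :=
                steps_split hΔ σ'.length σ' le_rfl hσ'sub r.q Y [Z] q hrest
              have hlens : τ₁.length + τ₂.length = σ'.length := by
                rw [hdecomp]; simp
              refine Or.inr (Or.inr ⟨Y, Z, s, rfl, τ₁, ?_, τ₂, ?_, by rw [hdecomp]⟩)
              · exact ih τ₁ (by omega) hτ₁sub r.q Y s k hpop1 (by simp at hk; omega)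
              · exact ih τ₂ (by omega) hτ₂sub s Z q k hpop2 (by simp at hk; omega)
          | Y :: Z :: W :: rest =>
              rw [hα] at hα2; simp at hα2

end Aux3
section Aux4

universe u' v' w'
variable {P : Type v'} {Γ : Type w'} {D : Type u'} [DecidableEq P] [DecidableEq Γ]

theorem bind_cons' {α β : Type*} (a : α) (l : List α) (f : α → List β) :
    (a :: l).flatMap f = f a ++ l.flatMap f := rfl

theorem combineList_map_bind {α β : Type*} (S : IdemSemiring' D) (f : α → List β) (g : β → D)
    (l : List α) :
    combineList S ((l.flatMap f).map g) = combineList S (l.map fun x => combineList S ((f x).map g)) := by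
  induction l with
  | nil => rfl
  | cons a l ih =>
      rw [bind_cons', List.map_append, combineList_append, ih, List.map_cons, combineList_cons]

theorem combineList_mul_combineList (S : IdemSemiring' D) (A B : List D) :
    S.mul (combineList S A) (combineList S B)
      = combineList S (A.flatMap (fun a => B.map (fun b => S.mul a b))) := by
  induction A with
  | nil => simp [combineList_nil, S.zero_mul]
  | cons a A ih =>
      rw [bind_cons', combineList_append, combineList_cons, S.add_mul, ih]
      congr 1
      have := combineList_map_mul_left S a id B
      simp only [List.map_id, id] at this
      exact this.symm

theorem ks1_eq (S : IdemSemiring' D) (Δ : List (PDSRule P Γ D)) (cf : PDSConfig P Γ) :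
    ∀ (k : ℕ) (c : PDSConfig P Γ),
      ks1 S Δ cf k c = combineList S ((pathsList Δ cf k c).map (seqWeight S)) := by
  intro k
  induction k with
  | zero => intro c; rfl
  | succ k ih =>
      intro c
      have hks : ks1 S Δ cf (k+1) c = rhs1 S Δ cf (ks1 S Δ cf k) c := rfl
      rw [hks, pathsList, List.map_append, combineList_append]
      unfold rhs1
      congr 1
      · by_cases hc : c = cf
        · rw [if_pos hc]
          simp [Ifun, hc, combineList_cons, combineList_nil, seqWeight_nil, S.add_zero]
        · rw [if_neg hc]
          simp [Ifun, hc, combineList_nil]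
      · rw [combineList_map_foldr_append]
        have hfold : ∀ l : List (PDSRule P Γ D),
            l.foldr (fun r acc => S.add (match applyRule? r c with
              | some c' => S.mul r.d (ks1 S Δ cf k c')
              | none => S.zero) acc) S.zero
          = l.foldr (fun r acc => S.add (combineList S ((match applyRule? r c with
              | some c' => (pathsList Δ cf k c').map (fun σ => r :: σ)
              | none => ([] : List (List (PDSRule P Γ D)))).map (seqWeight S))) acc) S.zero := by
          intro l
          induction l with
          | nil => rfl
          | cons r l ihl =>
              rw [List.foldr_cons, List.foldr_cons, ihl]
              congr 1
              rcases happ : applyRule? r c with _ | c'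
              · rfl
              · rw [List.map_map]
                have hcomp : (seqWeight S ∘ fun σ => r :: σ)
                    = fun σ => S.mul r.d (seqWeight S σ) := rfl
                rw [hcomp, combineList_map_mul_left, ← ih c']
        exact hfold Δ

theorem combineList_double (S : IdemSemiring' D)
    (r : PDSRule P Γ D) (T₁ T₂ : List (List (PDSRule P Γ D))) :
    combineList S ((T₁.flatMap (fun σ₁ => T₂.map (fun σ₂ => r :: (σ₁ ++ σ₂)))).map (seqWeight S))
      = S.mul r.d (S.mul (combineList S (T₁.map (seqWeight S)))
          (combineList S (T₂.map (seqWeight S)))) := by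
  induction T₁ with
  | nil => simp [combineList_nil, S.zero_mul, S.mul_zero]
  | cons σ₁ T₁ ih =>
      rw [bind_cons', List.map_append, combineList_append, ih, List.map_map]
      have hcomp : (seqWeight S ∘ fun σ₂ => r :: (σ₁ ++ σ₂))
          = fun σ₂ => S.mul (S.mul r.d (seqWeight S σ₁)) (seqWeight S σ₂) := by
        funext σ₂
        simp only [Function.comp_apply, seqWeight_cons, seqWeight_append, S.mul_assoc]
      rw [hcomp, combineList_map_mul_left, List.map_cons, combineList_cons,
        S.add_mul, S.mul_add, S.mul_assoc]

theorem ks2_eq [Fintype P] (S : IdemSemiring' D) (Δ : List (PDSRule P Γ D)) :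
    ∀ (k : ℕ) (p : P) (X : Γ) (q : P),
      ks2 S Δ k (p, X, q) = combineList S ((popTrees Δ k p X q).map (seqWeight S)) := by
  intro k
  induction k with
  | zero => intro p X q; rw [popTrees_zero]; rfl
  | succ k ih =>
      intro p X q
      have hks : ks2 S Δ (k+1) (p, X, q) = rhs2 S Δ (ks2 S Δ k) (p, X, q) := rfl
      rw [hks, popTrees, combineList_map_foldr_append]
      unfold rhs2
      have hfold : ∀ l : List (PDSRule P Γ D),
          l.foldr (fun r acc => S.add
            (if r.p = p ∧ r.X = X then
              match r.α with
              | [] => if r.q = q then r.d else S.zero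
              | [Y] => S.mul r.d (ks2 S Δ k (r.q, Y, q))
              | [Y, Z] => S.mul r.d (combineList S ((Finset.univ : Finset P).toList.map
                  (fun s => S.mul (ks2 S Δ k (r.q, Y, s)) (ks2 S Δ k (s, Z, q)))))
              | _ => S.zero
             else S.zero) acc) S.zero
        = l.foldr (fun r acc => S.add (combineList S
            ((if r.p = p ∧ r.X = X then
              match r.α with
              | [] => if r.q = q then [[r]] else []
              | [Y] => (popTrees Δ k r.q Y q).map (fun σ => r :: σ)
              | [Y, Z] => (Finset.univ : Finset P).toList.flatMap (fun s =>
                  (popTrees Δ k r.q Y s).flatMap (fun σ₁ =>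
                    (popTrees Δ k s Z q).map (fun σ₂ => r :: (σ₁ ++ σ₂))))
              | _ => ([] : List (List (PDSRule P Γ D)))
             else []).map (seqWeight S))) acc) S.zero := by
        intro l
        induction l with
        | nil => rfl
        | cons r l ihl =>
            rw [List.foldr_cons, List.foldr_cons, ihl]
            congr 1
            by_cases hpx : r.p = p ∧ r.X = X
            · rw [if_pos hpx, if_pos hpx]
              rcases hα : r.α with _ | ⟨Y, _ | ⟨Z, _ | _⟩⟩
              · by_cases hq : r.q = q
                · rw [if_pos hq, if_pos hq]
                  simp [combineList_cons, combineList_nil, seqWeight_cons, seqWeight_nil,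
                    S.add_zero, S.mul_one]
                · rw [if_neg hq, if_neg hq]; rfl
              · rw [List.map_map]
                have hcomp : (seqWeight S ∘ fun σ => r :: σ)
                    = fun σ => S.mul r.d (seqWeight S σ) := rfl
                rw [hcomp, combineList_map_mul_left, ← ih]
              · rw [combineList_map_bind]
                simp only [combineList_double]
                rw [combineList_map_mul_left]
                simp only [ih]
              · rfl
            · rw [if_neg hpx, if_neg hpx]; rfl
      exact hfold Δ

end Aux4
section Aux5

universe u' v' w'
variable {P : Type v'} {Γ : Type w'} {D : Type u'} [DecidableEq P] [DecidableEq Γ]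

theorem ks1_le (S : IdemSemiring' D) (Δ : List (PDSRule P Γ D)) (cf : PDSConfig P Γ)
    {k k' : ℕ} (hkk : k ≤ k') (c : PDSConfig P Γ) :
    S.le (ks1 S Δ cf k' c) (ks1 S Δ cf k c) := by
  rw [ks1_eq, ks1_eq]
  apply combineList_le_of_subset
  intro y hy
  simp only [List.mem_map] at hy ⊢
  obtain ⟨σ, hσ, rfl⟩ := hy
  exact ⟨σ, pathsList_mono hkk hσ, rfl⟩

theorem ks2_le [Fintype P] (S : IdemSemiring' D) (Δ : List (PDSRule P Γ D))
    {k k' : ℕ} (hkk : k ≤ k') (x : P × Γ × P) :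
    S.le (ks2 S Δ k' x) (ks2 S Δ k x) := by
  obtain ⟨p, X, q⟩ := x
  rw [ks2_eq, ks2_eq]
  apply combineList_le_of_subset
  intro y hy
  simp only [List.mem_map] at hy ⊢
  obtain ⟨σ, hσ, rfl⟩ := hy
  exact ⟨σ, popTrees_mono hkk hσ, rfl⟩

theorem eventually_const (S : IdemSemiring' D) (f : ℕ → D)
    (hdec : ∀ {k k' : ℕ}, k ≤ k' → S.le (f k') (f k))
    (hfin : (Set.range f).Finite) : ∃ N, ∀ k, N ≤ k → f k = f N := by
  by_cases hT : Set.Finite {k | f (k+1) ≠ f k}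
  · obtain ⟨N, hN⟩ := hT.bddAbove
    refine ⟨N+1, ?_⟩
    have key : ∀ m, f (N+1+m) = f (N+1) := by
      intro m
      induction m with
      | zero => rfl
      | succ m ih =>
          have hnot : (N+1+m) ∉ {k | f (k+1) ≠ f k} := by
            intro hc
            have := hN hc
            omega
          have heq : f (N+1+m+1) = f (N+1+m) := not_ne_iff.mp hnot
          rw [show N+1+(m+1) = N+1+m+1 by omega, heq, ih]
    intro k hk
    obtain ⟨m, rfl⟩ : ∃ m, k = N+1+m := ⟨k-(N+1), by omega⟩
    exact key m
  · exfalso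
    have hinf : Set.Infinite {k | f (k+1) ≠ f k} := hT
    have hinj : Set.InjOn f {k | f (k+1) ≠ f k} := by
      intro a ha b hb hab
      by_contra hne
      rcases Nat.lt_or_ge a b with h | h
      · have h1 : S.le (f b) (f (a+1)) := hdec (by omega)
        have h2 : S.le (f (a+1)) (f a) := hdec (by omega)
        exact ha (S.le_antisymm' h2 (by rw [hab]; exact h1))
      · have hba : b < a := by omega
        have h1 : S.le (f a) (f (b+1)) := hdec (by omega)
        have h2 : S.le (f (b+1)) (f b) := hdec (by omega)
        exact hb (S.le_antisymm' h2 (by rw [← hab]; exact h1))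
    exact (hinf.image hinj) (hfin.subset (Set.image_subset_range f _))

end Aux5

/-- Theorem 2, negative case: if the infinite equation system (1) has a witness
component, i.e. a configuration `c` where the Kleene sequence of (1) takes infinitely
many values, then the finite equation system (2) has a witness component as well,
i.e. a triple `(p, X, q)` where the Kleene sequence of (2) takes infinitely many values. -/
theorem eq1_witness_implies_eq2_witness {P : Type v} {Γ : Type w} {D : Type u}
    [Fintype P] [DecidableEq P] [Fintype Γ] [DecidableEq Γ]
    (S : IdemSemiring' D) (htot : ∀ a b : D, S.le a b ∨ S.le b a) (hpi : PreservesIneq S)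
    (Δ : List (PDSRule P Γ D)) (hΔ : ∀ r ∈ Δ, r.α.length ≤ 2) (pf : P)
    (hwit : ∃ c : PDSConfig P Γ,
      Set.Infinite (Set.range fun k => ks1 S Δ (pf, ([] : List Γ)) k c)) :
    ∃ (p : P) (X : Γ) (q : P),
      Set.Infinite (Set.range fun k => ks2 S Δ k (p, X, q)) := by
  by_contra hcon
  push_neg at hcon
  -- every component of system (2) has finite range, hence ks2 stabilizes globally
  have hfin : ∀ x : P × Γ × P, (Set.range fun k => ks2 S Δ k x).Finite := by
    intro ⟨p, X, q⟩
    exact hcon p X q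
  have h1 : ∀ x : P × Γ × P, ∃ N, ∀ k, N ≤ k → ks2 S Δ k x = ks2 S Δ N x := by
    intro x
    exact eventually_const S (fun k => ks2 S Δ k x) (fun hkk => ks2_le S Δ hkk x) (hfin x)
  choose Nf hNf using h1
  set N := (Finset.univ : Finset (P × Γ × P)).sup Nf with hNdef
  have hstab : ∀ (x : P × Γ × P) (k : ℕ), N ≤ k → ks2 S Δ k x = ks2 S Δ N x := by
    intro x k hk
    have hx : Nf x ≤ N := Finset.le_sup (Finset.mem_univ x)
    rw [hNf x k (le_trans hx hk), hNf x N hx]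
  -- absorption of every pop sequence weight into the stabilized value of system (2)
  have habs : ∀ (p : P) (X : Γ) (q : P) (σ : List (PDSRule P Γ D)),
      (∀ r ∈ σ, r ∈ Δ) → Steps σ (p, [X]) (q, ([] : List Γ)) →
      S.le (ks2 S Δ N (p, X, q)) (seqWeight S σ) := by
    intro p X q σ hsub hsteps
    set K := max N (σ.length + 1) with hKdef
    have hmem : σ ∈ popTrees Δ K p X q :=
      popTrees_complete hΔ σ.length σ le_rfl hsub p X q K hsteps (by omega)
    have h2 : S.le (ks2 S Δ K (p, X, q)) (seqWeight S σ) := by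
      rw [ks2_eq]
      exact le_combineList_of_mem S (List.mem_map_of_mem hmem)
    rw [hstab (p, X, q) K (le_max_left _ _)] at h2
    exact h2
  -- stabilization of system (1), by induction on the stack
  have main : ∀ γ : List Γ, ∃ M : ℕ, ∀ (p : P) (k : ℕ), M ≤ k →
      ks1 S Δ (pf, ([] : List Γ)) k (p, γ) = ks1 S Δ (pf, ([] : List Γ)) M (p, γ) := by
    intro γ
    induction γ with
    | nil =>
        refine ⟨1, ?_⟩
        intro p k hk
        apply S.le_antisymm' (ks1_le S Δ _ hk _)
        rw [ks1_eq S Δ _ k]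
        apply le_combineList
        intro x hx
        obtain ⟨σ, hσ, rfl⟩ := List.mem_map.mp hx
        obtain ⟨hsub, hsteps, _⟩ := pathsList_sound hσ
        obtain ⟨hσnil, hcf⟩ := steps_nil_stack hsteps
        subst hσnil
        have hmem : ([] : List (PDSRule P Γ D)) ∈ pathsList Δ (pf, ([] : List Γ)) 1 (p, []) :=
          pathsList_complete (by simp) (steps_nil'.mpr hcf.symm) (by simp)
        rw [ks1_eq S Δ _ 1]
        exact le_combineList_of_mem S (List.mem_map_of_mem hmem)
    | cons X γ' ihγ =>
        obtain ⟨M', hM'⟩ := ihγ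
        refine ⟨2 ^ N + M', ?_⟩
        intro p k hk
        set M := 2 ^ N + M' with hMdef
        apply S.le_antisymm' (ks1_le S Δ _ hk _)
        rw [ks1_eq S Δ _ k]
        apply le_combineList
        intro x hx
        obtain ⟨σ, hσ, rfl⟩ := List.mem_map.mp hx
        obtain ⟨hsub, hsteps, _⟩ := pathsList_sound hσ
        obtain ⟨q, σ₁, σ₂, hdecomp, hsub1, hsub2, hpop, htail⟩ :=
          steps_split hΔ σ.length σ le_rfl hsub p X γ' pf hsteps
        -- key1 : stabilized [pXq] below the pop-sequence weight
        have key1 : S.le (ks2 S Δ N (p, X, q)) (seqWeight S σ₁) := habs p X q σ₁ hsub1 hpop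
        -- key2 : stabilized [q,γ'] below the tail weight
        have key2 : S.le (ks1 S Δ (pf, ([] : List Γ)) M' (q, γ')) (seqWeight S σ₂) := by
          set K2 := max M' (σ₂.length + 1) with hK2def
          have hmem : σ₂ ∈ pathsList Δ (pf, ([] : List Γ)) K2 (q, γ') :=
            pathsList_complete hsub2 htail (by omega)
          have h2 : S.le (ks1 S Δ (pf, ([] : List Γ)) K2 (q, γ')) (seqWeight S σ₂) := by
            rw [ks1_eq]
            exact le_combineList_of_mem S (List.mem_map_of_mem hmem)
          rw [hM' q K2 (le_max_left _ _)] at h2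
          exact h2
        have key3 : S.le (S.mul (ks2 S Δ N (p, X, q)) (ks1 S Δ (pf, ([] : List Γ)) M' (q, γ')))
            (seqWeight S σ) := by
          rw [hdecomp, seqWeight_append]
          exact S.mul_le_mul' key1 key2
        have key4 : S.le (ks1 S Δ (pf, ([] : List Γ)) M (p, X :: γ'))
            (S.mul (ks2 S Δ N (p, X, q)) (ks1 S Δ (pf, ([] : List Γ)) M' (q, γ'))) := by
          rw [ks2_eq, ks1_eq S Δ _ M', combineList_mul_combineList]
          apply le_combineList
          intro x hx
          simp only [List.mem_flatMap, List.mem_map] at hx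
          obtain ⟨a, ⟨τ, hτ, rfl⟩, b, ⟨υ, hυ, rfl⟩, rfl⟩ := hx
          obtain ⟨hτsub, hτsteps, hτlen⟩ := popTrees_sound hτ
          obtain ⟨hυsub, hυsteps, hυlen⟩ := pathsList_sound hυ
          have hlift : Steps τ (p, [X] ++ γ') (q, [] ++ γ') := steps_lift hτsteps γ'
          simp only [List.nil_append, List.singleton_append] at hlift
          have hpath : Steps (τ ++ υ) (p, X :: γ') (pf, ([] : List Γ)) :=
            steps_append' hlift hυsteps
          have hpathsub : ∀ r ∈ τ ++ υ, r ∈ Δ := by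
            intro r hr
            rcases List.mem_append.mp hr with hr | hr
            · exact hτsub r hr
            · exact hυsub r hr
          have hmem : τ ++ υ ∈ pathsList Δ (pf, ([] : List Γ)) M (p, X :: γ') :=
            pathsList_complete hpathsub hpath (by simp [hMdef]; omega)
          have h3 : S.le (ks1 S Δ (pf, ([] : List Γ)) M (p, X :: γ'))
              (seqWeight S (τ ++ υ)) := by
            rw [ks1_eq S Δ _ M]
            exact le_combineList_of_mem S (List.mem_map_of_mem hmem)
          rw [seqWeight_append] at h3
          exact h3
        exact S.le_trans' key4 key3
  -- conclude: every component of system (1) has finite range — contradiction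
  obtain ⟨⟨p, γ⟩, hinf⟩ := hwit
  obtain ⟨M, hM⟩ := main γ
  apply hinf
  apply Set.Finite.subset (Set.Finite.image (fun k => ks1 S Δ (pf, ([] : List Γ)) k (p, γ))
    (Set.finite_Iic M))
  rintro _ ⟨k, rfl⟩
  rcases le_or_gt k M with hkM | hkM
  · exact ⟨k, Set.mem_Iic.mpr hkM, rfl⟩
  · exact ⟨M, Set.mem_Iic.mpr le_rfl, (hM p k (by omega)).symm⟩
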